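/- Let S be a commutative ring, F a formal group law over S, n ≥ 2, and 1 ≤ i ≤ n−1. Then the following two sequences of R-modules are short exact: (i) 0 → R → A → R → 0, where the first map is r ↦ (r ⊗ 1)·ξ and the second is the twisted multiplication μ_s; i.e. r ↦ (r⊗1)·ξ is injective, μ_s is surjective, and the image of the first map equals the kernel of μ_s; (ii) 0 → R → A → R → 0, where the first map is r ↦ (r ⊗ 1)·ξ' and the second is the multiplication μ. -/

import Mathlib

/- Common setup: substitution of multivariate power series, formal group laws,
formal inverses, and the variable–swapping operation. -/

open MvPowerSeries Finsupp

noncomputable section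

variable {S : Type*} [CommRing S]

/-- Substitution of a family of multivariate power series (each intended to have zero
constant coefficient) into a power series in `k` variables.  When every `a j` has zero
constant coefficient, the coefficient of a monomial `m` of the substituted series only
receives contributions from exponents `d` with `d j ≤ deg m`, so the finite sum below
computes the genuine substitution. -/
noncomputable def msubst {k n : ℕ} (a : Fin k → MvPowerSeries (Fin n) S)
    (F : MvPowerSeries (Fin k) S) : MvPowerSeries (Fin n) S :=
  fun m =>
    ∑ d ∈ Finset.Iic (equivFunOnFinite.symm fun _ : Fin k => m.sum fun _ e => e),
      MvPowerSeries.coeff d F * MvPowerSeries.coeff m (∏ j, a j ^ d j)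

/-- `F ∈ S[[x,y]]` is a (one-dimensional, commutative) formal group law over `S`:
zero constant coefficient, commutativity `F(x,y) = F(y,x)`, unitality `F(x,0) = x`,
and associativity `F(F(x,y),z) = F(x,F(y,z))`. -/
def IsFormalGroupLaw (F : MvPowerSeries (Fin 2) S) : Prop :=
  MvPowerSeries.constantCoeff (σ := Fin 2) (R := S) F = 0 ∧
  msubst ![(X 1 : MvPowerSeries (Fin 2) S), X 0] F = F ∧
  msubst ![(X 0 : MvPowerSeries (Fin 2) S), 0] F = X 0 ∧
  msubst ![msubst ![(X 0 : MvPowerSeries (Fin 3) S), X 1] F, X 2] F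
    = msubst ![(X 0 : MvPowerSeries (Fin 3) S), msubst ![(X 1 : MvPowerSeries (Fin 3) S), X 2] F] F

/-- `ι ∈ S[[x]]` is the formal inverse of `F`: it has zero constant coefficient
and `F(x, ι(x)) = 0`. -/
def IsFormalInverse (F : MvPowerSeries (Fin 2) S) (ι : MvPowerSeries (Fin 1) S) : Prop :=
  MvPowerSeries.constantCoeff (σ := Fin 1) (R := S) ι = 0 ∧
  msubst ![(X 0 : MvPowerSeries (Fin 1) S), ι] F = 0

/-- `ι(b)`, the substitution of `b` into the formal inverse `ι`. -/
noncomputable def fneg (ι : MvPowerSeries (Fin 1) S) {n : ℕ}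
    (b : MvPowerSeries (Fin n) S) : MvPowerSeries (Fin n) S :=
  msubst ![b] ι

/-- `a −_F b := F(a, ι(b))`. -/
noncomputable def fsub (F : MvPowerSeries (Fin 2) S) (ι : MvPowerSeries (Fin 1) S) {n : ℕ}
    (a b : MvPowerSeries (Fin n) S) : MvPowerSeries (Fin n) S :=
  msubst ![a, fneg ι b] F

/-- Substitution `g(a,b)` of two power series into a two-variable power series `g`. -/
noncomputable def gsub (g : MvPowerSeries (Fin 2) S) {n : ℕ}
    (a b : MvPowerSeries (Fin n) S) : MvPowerSeries (Fin n) S :=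
  msubst ![a, b] g

/-- The map on multivariate power series interchanging the variables `x_i` and `x_j`
(the renaming along the transposition `(i,j)`). -/
def swapVars {n : ℕ} (i j : Fin n) (f : MvPowerSeries (Fin n) S) :
    MvPowerSeries (Fin n) S :=
  fun m => f (equivMapDomain (Equiv.swap i j) m)

theorem swapVars_coeff {n : ℕ} (i j : Fin n) (f : MvPowerSeries (Fin n) S) (m : Fin n →₀ ℕ) :
    MvPowerSeries.coeff m (swapVars i j f)
      = MvPowerSeries.coeff (equivMapDomain (Equiv.swap i j) m) f := rfl

theorem equivMapDomain_swap_invol {n : ℕ} (i j : Fin n) (m : Fin n →₀ ℕ) :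
    equivMapDomain (Equiv.swap i j) (equivMapDomain (Equiv.swap i j) m) = m := by
  rw [← equivMapDomain_trans, Equiv.swap_swap, equivMapDomain_refl]

theorem equivMapDomain_add' {n : ℕ} (e : Fin n ≃ Fin n) (a b : Fin n →₀ ℕ) :
    equivMapDomain e (a + b) = equivMapDomain e a + equivMapDomain e b := by
  ext x; simp [equivMapDomain_apply]

theorem swapVars_add {n : ℕ} (i j : Fin n) (f h : MvPowerSeries (Fin n) S) :
    swapVars i j (f + h) = swapVars i j f + swapVars i j h := rfl

theorem swapVars_mul {n : ℕ} (i j : Fin n) (f h : MvPowerSeries (Fin n) S) :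
    swapVars i j (f * h) = swapVars i j f * swapVars i j h := by
  ext m
  rw [swapVars_coeff, MvPowerSeries.coeff_mul, MvPowerSeries.coeff_mul]
  refine Finset.sum_nbij'
    (fun p => (equivMapDomain (Equiv.swap i j) p.1, equivMapDomain (Equiv.swap i j) p.2))
    (fun p => (equivMapDomain (Equiv.swap i j) p.1, equivMapDomain (Equiv.swap i j) p.2))
    ?_ ?_ ?_ ?_ ?_
  · intro p hp
    rw [Finset.HasAntidiagonal.mem_antidiagonal] at hp ⊢
    rw [← equivMapDomain_add', hp, equivMapDomain_swap_invol]
  · intro p hp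
    rw [Finset.HasAntidiagonal.mem_antidiagonal] at hp ⊢
    rw [← equivMapDomain_add', hp]
  · intro p _; simp [equivMapDomain_swap_invol]
  · intro p _; simp [equivMapDomain_swap_invol]
  · intro p _
    rw [swapVars_coeff, swapVars_coeff, equivMapDomain_swap_invol, equivMapDomain_swap_invol]

theorem swapVars_C {n : ℕ} (i j : Fin n) (s : S) :
    swapVars i j (MvPowerSeries.C (σ := Fin n) (R := S) s) = MvPowerSeries.C (σ := Fin n) (R := S) s := by
  ext m
  rw [swapVars_coeff, MvPowerSeries.coeff_C, MvPowerSeries.coeff_C]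
  by_cases hm : m = 0
  · subst hm; rw [equivMapDomain_zero]
  · rw [if_neg, if_neg hm]
    intro hc
    apply hm
    have := congrArg (equivMapDomain (Equiv.swap i j)) hc
    rwa [equivMapDomain_swap_invol, equivMapDomain_zero] at this

theorem swapVars_one {n : ℕ} (i j : Fin n) :
    swapVars i j (1 : MvPowerSeries (Fin n) S) = 1 := by
  have := swapVars_C (S := S) i j 1
  rwa [map_one] at this

/-- The fixed subalgebra `R^{s_i}` of power series invariant under interchanging
the variables `x_i` and `x_j`. -/
noncomputable def fixedSubalgebra (S : Type*) [CommRing S] {n : ℕ} (i j : Fin n) :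
    Subalgebra S (MvPowerSeries (Fin n) S) where
  carrier := {f | swapVars i j f = f}
  mul_mem' := by
    intro a b ha hb
    simp only [Set.mem_setOf_eq] at *
    rw [swapVars_mul, ha, hb]
  add_mem' := by
    intro a b ha hb
    simp only [Set.mem_setOf_eq] at *
    rw [swapVars_add, ha, hb]
  algebraMap_mem' := fun s => swapVars_C i j s

/-- `s_i` as an algebra homomorphism over the fixed subalgebra. -/
noncomputable def swapAlgHom (S : Type*) [CommRing S] {n : ℕ} (i j : Fin n) :
    MvPowerSeries (Fin n) S →ₐ[fixedSubalgebra S i j] MvPowerSeries (Fin n) S where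
  toFun := swapVars i j
  map_one' := swapVars_one i j
  map_mul' := swapVars_mul i j
  map_zero' := rfl
  map_add' := swapVars_add i j
  commutes' := fun r => r.2

open TensorProduct in
/-- The elementary Bott–Samelson bimodule `A = R ⊗_{R^{s_i}} R`. -/
noncomputable abbrev BSB (S : Type*) [CommRing S] {n : ℕ} (i j : Fin n) : Type _ :=
  (MvPowerSeries (Fin n) S) ⊗[fixedSubalgebra S i j] (MvPowerSeries (Fin n) S)

/-- The multiplication map `μ : A → R`, `r1 ⊗ r2 ↦ r1·r2`. -/
noncomputable def mulHom (S : Type*) [CommRing S] {n : ℕ} (i j : Fin n) :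
    BSB S i j →ₐ[fixedSubalgebra S i j] MvPowerSeries (Fin n) S :=
  Algebra.TensorProduct.productMap (AlgHom.id _ _) (AlgHom.id _ _)

/-- The twisted multiplication map `μ_s : A → R`, `r1 ⊗ r2 ↦ r1·s_i(r2)`. -/
noncomputable def mulsHom (S : Type*) [CommRing S] {n : ℕ} (i j : Fin n) :
    BSB S i j →ₐ[fixedSubalgebra S i j] MvPowerSeries (Fin n) S :=
  Algebra.TensorProduct.productMap (AlgHom.id _ _) (swapAlgHom S i j)

open TensorProduct in
/-- The element `ξ = x_i⊗1 −_F 1⊗x_{i+1} := (g(x_i,x_j)⁻¹ ⊗ 1)·(1 ⊗ x_i − x_j ⊗ 1)` of `A`. -/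
noncomputable def xiElt (g : MvPowerSeries (Fin 2) S) {n : ℕ} (i j : Fin n) : BSB S i j :=
  (Ring.inverse (gsub g (X i) (X j)) ⊗ₜ[fixedSubalgebra S i j] (1 : MvPowerSeries (Fin n) S)) *
    ((1 : MvPowerSeries (Fin n) S) ⊗ₜ[fixedSubalgebra S i j] (X i)
      - (X j) ⊗ₜ[fixedSubalgebra S i j] (1 : MvPowerSeries (Fin n) S))

open TensorProduct in
/-- The element `ξ' = x_{i+1}⊗1 −_F 1⊗x_{i+1} := (g(x_j,x_i)⁻¹ ⊗ 1)·(1 ⊗ x_i − x_i ⊗ 1)` of `A`. -/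
noncomputable def xiElt' (g : MvPowerSeries (Fin 2) S) {n : ℕ} (i j : Fin n) : BSB S i j :=
  (Ring.inverse (gsub g (X j) (X i)) ⊗ₜ[fixedSubalgebra S i j] (1 : MvPowerSeries (Fin n) S)) *
    ((1 : MvPowerSeries (Fin n) S) ⊗ₜ[fixedSubalgebra S i j] (X i)
      - (X i) ⊗ₜ[fixedSubalgebra S i j] (1 : MvPowerSeries (Fin n) S))

open TensorProduct

/-! ### Auxiliary development: the Demazure-type operator and exactness. -/

section Aux

variable {n : ℕ} {i j : Fin n}

/-- Replace the values of `m` at `i` and `j` by `a` and `b`. -/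
def mset (i j : Fin n) (m : Fin n →₀ ℕ) (a b : ℕ) : Fin n →₀ ℕ :=
  Finsupp.update (Finsupp.update m i a) j b

theorem mset_apply_i (hij : i ≠ j) (m : Fin n →₀ ℕ) (a b : ℕ) : mset i j m a b i = a := by
  simp [mset, Finsupp.coe_update, Function.update_apply, hij]

theorem mset_apply_j (m : Fin n →₀ ℕ) (a b : ℕ) : mset i j m a b j = b := by
  simp [mset, Finsupp.coe_update]

theorem mset_apply_other {k : Fin n} (hki : k ≠ i) (hkj : k ≠ j) (m : Fin n →₀ ℕ) (a b : ℕ) :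
    mset i j m a b k = m k := by
  simp [mset, Finsupp.coe_update, Function.update_apply, hki, hkj]

theorem mset_self (hij : i ≠ j) (m : Fin n →₀ ℕ) : mset i j m (m i) (m j) = m := by
  ext k
  rcases eq_or_ne k j with rfl | hkj
  · rw [mset_apply_j]
  · rcases eq_or_ne k i with rfl | hki
    · rw [mset_apply_i hij]
    · rw [mset_apply_other hki hkj]

theorem swap_eq_mset (hij : i ≠ j) (m : Fin n →₀ ℕ) :
    equivMapDomain (Equiv.swap i j) m = mset i j m (m j) (m i) := by
  ext k
  rw [equivMapDomain_apply, Equiv.symm_swap]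
  rcases eq_or_ne k j with rfl | hkj
  · rw [mset_apply_j, Equiv.swap_apply_right]
  · rcases eq_or_ne k i with rfl | hki
    · rw [mset_apply_i hij, Equiv.swap_apply_left]
    · rw [mset_apply_other hki hkj, Equiv.swap_apply_of_ne_of_ne hki hkj]

theorem mset_sub_single_i (hij : i ≠ j) (m : Fin n →₀ ℕ) (a b : ℕ) :
    mset i j (m - Finsupp.single i 1) a b = mset i j m a b := by
  ext k
  rcases eq_or_ne k j with rfl | hkj
  · rw [mset_apply_j, mset_apply_j]
  · rcases eq_or_ne k i with rfl | hki
    · rw [mset_apply_i hij, mset_apply_i hij]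
    · rw [mset_apply_other hki hkj, mset_apply_other hki hkj, Finsupp.tsub_apply,
        Finsupp.single_eq_of_ne' (Ne.symm hki), tsub_zero]

theorem mset_sub_single_j (hij : i ≠ j) (m : Fin n →₀ ℕ) (a b : ℕ) :
    mset i j (m - Finsupp.single j 1) a b = mset i j m a b := by
  ext k
  rcases eq_or_ne k j with rfl | hkj
  · rw [mset_apply_j, mset_apply_j]
  · rcases eq_or_ne k i with rfl | hki
    · rw [mset_apply_i hij, mset_apply_i hij]
    · rw [mset_apply_other hki hkj, mset_apply_other hki hkj, Finsupp.tsub_apply,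
        Finsupp.single_eq_of_ne' (Ne.symm hkj), tsub_zero]

/-- The Demazure-type operator: `dem i j f` is `(f - s f)/(x_i - x_j)`, given by an explicit
coefficientwise formula. -/
noncomputable def dem (i j : Fin n) (f : MvPowerSeries (Fin n) S) : MvPowerSeries (Fin n) S :=
  fun m => ∑ q ∈ Finset.range (min (m i) (m j) + 1),
    (f (mset i j m (m i + m j + 1 - q) q) - f (mset i j m q (m i + m j + 1 - q)))

/-- Pure arithmetic/combinatorial core of the key identity. -/
theorem sum_key (G : ℕ → ℕ → S) (c d : ℕ) :
    (if 1 ≤ c then ∑ q ∈ Finset.range (min (c - 1) d + 1), (G (c + d - q) q - G q (c + d - q))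
      else 0)
    - (if 1 ≤ d then ∑ q ∈ Finset.range (min c (d - 1) + 1), (G (c + d - q) q - G q (c + d - q))
      else 0)
    = G c d - G d c := by
  rcases Nat.lt_trichotomy c d with h | h | h
  · have hR : ∑ q ∈ Finset.range (min c (d - 1) + 1), (G (c + d - q) q - G q (c + d - q))
        = (∑ q ∈ Finset.range c, (G (c + d - q) q - G q (c + d - q))) + (G d c - G c d) := by
      rw [show min c (d - 1) = c from by omega, Finset.sum_range_succ,
        show c + d - c = d from by omega]
    rw [if_pos (by omega : 1 ≤ d), hR]
    by_cases h0 : 1 ≤ c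
    · rw [if_pos h0, show min (c - 1) d + 1 = c from by omega]
      ring
    · rw [if_neg h0, show Finset.range c = ∅ from by
        rw [show c = 0 from by omega]; exact Finset.range_zero, Finset.sum_empty]
      ring
  · subst h
    rw [show min (c - 1) c = c - 1 from by omega, show min c (c - 1) = c - 1 from by omega,
      sub_self, sub_self]
  · have hR : ∑ q ∈ Finset.range (min (c - 1) d + 1), (G (c + d - q) q - G q (c + d - q))
        = (∑ q ∈ Finset.range d, (G (c + d - q) q - G q (c + d - q))) + (G c d - G d c) := by
      rw [show min (c - 1) d = d from by omega, Finset.sum_range_succ,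
        show c + d - d = c from by omega]
    rw [if_pos (by omega : 1 ≤ c), hR]
    by_cases h0 : 1 ≤ d
    · rw [if_pos h0, show min c (d - 1) + 1 = d from by omega]
      ring
    · rw [if_neg h0, show Finset.range d = ∅ from by
        rw [show d = 0 from by omega]; exact Finset.range_zero, Finset.sum_empty]
      ring

theorem dem_mul_key (hij : i ≠ j) (f : MvPowerSeries (Fin n) S) :
    (X i - X j : MvPowerSeries (Fin n) S) * dem i j f = f - swapVars i j f := by
  classical
  ext m
  rw [sub_mul, map_sub, map_sub]
  rw [X_def, X_def, coeff_monomial_mul, coeff_monomial_mul]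
  simp only [one_mul, Finsupp.single_le_iff]
  have hA : ∀ _ : 1 ≤ m i, (dem i j f : MvPowerSeries (Fin n) S) (m - Finsupp.single i 1)
      = ∑ q ∈ Finset.range (min (m i - 1) (m j) + 1),
          (f (mset i j m (m i + m j - q) q) - f (mset i j m q (m i + m j - q))) := by
    intro h1
    have e1 : ((m - Finsupp.single i 1 : Fin n →₀ ℕ)) i = m i - 1 := by
      rw [Finsupp.tsub_apply, Finsupp.single_eq_same]
    have e2 : ((m - Finsupp.single i 1 : Fin n →₀ ℕ)) j = m j := by
      rw [Finsupp.tsub_apply, Finsupp.single_eq_of_ne' hij, tsub_zero]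
    simp only [dem, e1, e2, mset_sub_single_i hij]
    refine Finset.sum_congr rfl fun q hq => ?_
    rw [show m i - 1 + m j + 1 - q = m i + m j - q from by omega]
  have hB : ∀ _ : 1 ≤ m j, (dem i j f : MvPowerSeries (Fin n) S) (m - Finsupp.single j 1)
      = ∑ q ∈ Finset.range (min (m i) (m j - 1) + 1),
          (f (mset i j m (m i + m j - q) q) - f (mset i j m q (m i + m j - q))) := by
    intro h1
    have e1 : ((m - Finsupp.single j 1 : Fin n →₀ ℕ)) i = m i := by
      rw [Finsupp.tsub_apply, Finsupp.single_eq_of_ne' (Ne.symm hij), tsub_zero]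
    have e2 : ((m - Finsupp.single j 1 : Fin n →₀ ℕ)) j = m j - 1 := by
      rw [Finsupp.tsub_apply, Finsupp.single_eq_same]
    simp only [dem, e1, e2, mset_sub_single_j hij]
    refine Finset.sum_congr rfl fun q hq => ?_
    rw [show m i + (m j - 1) + 1 - q = m i + m j - q from by omega]
  have hA' : (if 1 ≤ m i then (MvPowerSeries.coeff (m - Finsupp.single i 1)) (dem i j f) else 0)
      = (if 1 ≤ m i then ∑ q ∈ Finset.range (min (m i - 1) (m j) + 1),
          (f (mset i j m (m i + m j - q) q) - f (mset i j m q (m i + m j - q))) else 0) := by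
    split_ifs with h
    · rw [MvPowerSeries.coeff_apply, hA h]
    · rfl
  have hB' : (if 1 ≤ m j then (MvPowerSeries.coeff (m - Finsupp.single j 1)) (dem i j f) else 0)
      = (if 1 ≤ m j then ∑ q ∈ Finset.range (min (m i) (m j - 1) + 1),
          (f (mset i j m (m i + m j - q) q) - f (mset i j m q (m i + m j - q))) else 0) := by
    split_ifs with h
    · rw [MvPowerSeries.coeff_apply, hB h]
    · rfl
  rw [hA', hB', swapVars_coeff, MvPowerSeries.coeff_apply, MvPowerSeries.coeff_apply,
    swap_eq_mset hij]
  rw [show f m = f (mset i j m (m i) (m j)) from by rw [mset_self hij]]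
  exact sum_key (fun a b => f (mset i j m a b)) (m i) (m j)

theorem X_sub_X_regular (hij : i ≠ j) (h : MvPowerSeries (Fin n) S)
    (hh : (X i - X j : MvPowerSeries (Fin n) S) * h = 0) : h = 0 := by
  classical
  by_contra hne
  obtain ⟨m0, hm0⟩ : ∃ m0, h m0 ≠ 0 := by
    by_contra hc
    push_neg at hc
    apply hne
    ext m
    rw [MvPowerSeries.coeff_apply, hc m, map_zero]
  set D := ∑ k, m0 k with hD
  set T := (Finset.Iic (equivFunOnFinite.symm fun _ : Fin n => D)).filter
    (fun m => (∑ k, m k) = D ∧ h m ≠ 0) with hT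
  have hbound : ∀ m : Fin n →₀ ℕ, (∑ k, m k) = D →
      m ∈ Finset.Iic (equivFunOnFinite.symm fun _ : Fin n => D) := by
    intro m hm
    rw [Finset.mem_Iic, Finsupp.le_def]
    intro k
    have : m k ≤ ∑ k', m k' := Finset.single_le_sum (fun k' _ => Nat.zero_le _) (Finset.mem_univ k)
    simpa [hm] using this
  have hm0T : m0 ∈ T := by
    rw [hT, Finset.mem_filter]
    exact ⟨hbound m0 rfl, rfl, hm0⟩
  obtain ⟨m, hmT, hmax⟩ := T.exists_max_image (fun m => m i) ⟨m0, hm0T⟩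
  rw [hT, Finset.mem_filter] at hmT
  obtain ⟨-, hdeg, hne'⟩ := hmT
  have h0 : MvPowerSeries.coeff (m + Finsupp.single i 1) ((X i - X j : MvPowerSeries (Fin n) S) * h) = 0 := by
    rw [hh, map_zero]
  rw [sub_mul, map_sub, X_def, X_def, coeff_monomial_mul, coeff_monomial_mul,
    if_pos (le_add_self : Finsupp.single i 1 ≤ m + Finsupp.single i 1)] at h0
  simp only [one_mul] at h0
  rw [add_tsub_cancel_right] at h0
  have hji : ((m + Finsupp.single i 1 : Fin n →₀ ℕ)) j = m j := by
    rw [Finsupp.add_apply, Finsupp.single_eq_of_ne' hij, add_zero]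
  by_cases hj : 1 ≤ m j
  · have hle : Finsupp.single j 1 ≤ m + Finsupp.single i 1 := by
      rw [Finsupp.single_le_iff, hji]; exact hj
    rw [if_pos hle, MvPowerSeries.coeff_apply, MvPowerSeries.coeff_apply] at h0
    set m' := m + Finsupp.single i 1 - Finsupp.single j 1 with hm'
    have hm'ne : h m' ≠ 0 := by
      intro hcon
      rw [hcon, sub_zero] at h0
      exact hne' h0
    have hsum : (∑ k, m' k) = D := by
      have h1 : m' + Finsupp.single j 1 = m + Finsupp.single i 1 := tsub_add_cancel_of_le hle
      have h2 : (∑ k, ((m' + Finsupp.single j 1 : Fin n →₀ ℕ)) k) = ∑ k, ((m + Finsupp.single i 1 : Fin n →₀ ℕ)) k := by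
        rw [h1]
      simp only [Finsupp.add_apply] at h2
      rw [Finset.sum_add_distrib, Finset.sum_add_distrib] at h2
      have hsj : (∑ k, (Finsupp.single j 1 : Fin n →₀ ℕ) k) = 1 := by
        simp [Finsupp.single_apply]
      have hsi : (∑ k, (Finsupp.single i 1 : Fin n →₀ ℕ) k) = 1 := by
        simp [Finsupp.single_apply]
      omega
    have hm'T : m' ∈ T := by
      rw [hT, Finset.mem_filter]
      exact ⟨hbound m' hsum, hsum, hm'ne⟩
    have hm'i : m' i = m i + 1 := by
      rw [hm', Finsupp.tsub_apply, Finsupp.add_apply, Finsupp.single_eq_same,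
        Finsupp.single_eq_of_ne' (Ne.symm hij), tsub_zero]
    have := hmax m' hm'T
    simp only [hm'i] at this
    omega
  · rw [if_neg (by rw [Finsupp.single_le_iff, hji]; exact hj), sub_zero,
      MvPowerSeries.coeff_apply] at h0
    exact hne' h0

theorem swapVars_sub {f h : MvPowerSeries (Fin n) S} :
    swapVars i j (f - h) = swapVars i j f - swapVars i j h := rfl

theorem swapVars_invol (f : MvPowerSeries (Fin n) S) :
    swapVars i j (swapVars i j f) = f := by
  ext m
  rw [swapVars_coeff, swapVars_coeff, equivMapDomain_swap_invol]

theorem swapVars_X_left (hij : i ≠ j) :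
    swapVars i j (X i : MvPowerSeries (Fin n) S) = X j := by
  classical
  ext m
  rw [swapVars_coeff, MvPowerSeries.coeff_X, MvPowerSeries.coeff_X]
  by_cases hm : m = Finsupp.single j 1
  · subst hm
    rw [if_pos rfl, if_pos]
    rw [show equivMapDomain (Equiv.swap i j) (Finsupp.single j 1) = Finsupp.single i 1 from by
      rw [Finsupp.equivMapDomain_single, Equiv.swap_apply_right]]
  · rw [if_neg, if_neg hm]
    intro hcon
    apply hm
    have := congrArg (equivMapDomain (Equiv.swap i j)) hcon
    rwa [equivMapDomain_swap_invol, Finsupp.equivMapDomain_single, Equiv.swap_apply_left] at this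

theorem swapVars_X_right (hij : i ≠ j) :
    swapVars i j (X j : MvPowerSeries (Fin n) S) = X i := by
  classical
  ext m
  rw [swapVars_coeff, MvPowerSeries.coeff_X, MvPowerSeries.coeff_X]
  by_cases hm : m = Finsupp.single i 1
  · subst hm
    rw [if_pos rfl, if_pos]
    rw [show equivMapDomain (Equiv.swap i j) (Finsupp.single i 1) = Finsupp.single j 1 from by
      rw [Finsupp.equivMapDomain_single, Equiv.swap_apply_left]]
  · rw [if_neg, if_neg hm]
    intro hcon
    apply hm
    have := congrArg (equivMapDomain (Equiv.swap i j)) hcon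
    rwa [equivMapDomain_swap_invol, Finsupp.equivMapDomain_single, Equiv.swap_apply_right] at this

theorem dem_add (hij : i ≠ j) (f f' : MvPowerSeries (Fin n) S) :
    dem i j (f + f') = dem i j f + dem i j f' := by
  have h1 : (X i - X j : MvPowerSeries (Fin n) S)
      * (dem i j (f + f') - (dem i j f + dem i j f')) = 0 := by
    rw [mul_sub, mul_add, dem_mul_key hij, dem_mul_key hij, dem_mul_key hij, swapVars_add]
    ring
  exact sub_eq_zero.mp (X_sub_X_regular hij _ h1)

theorem dem_smul (hij : i ≠ j) (g f : MvPowerSeries (Fin n) S) (hg : swapVars i j g = g) :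
    dem i j (g * f) = g * dem i j f := by
  have h1 : (X i - X j : MvPowerSeries (Fin n) S) * (dem i j (g * f) - g * dem i j f) = 0 := by
    rw [mul_sub, dem_mul_key hij, swapVars_mul, hg,
      show (X i - X j : MvPowerSeries (Fin n) S) * (g * dem i j f)
        = g * ((X i - X j) * dem i j f) from by ring, dem_mul_key hij]
    ring
  exact sub_eq_zero.mp (X_sub_X_regular hij _ h1)

theorem dem_one (hij : i ≠ j) : dem i j (1 : MvPowerSeries (Fin n) S) = 0 := by
  have h1 : (X i - X j : MvPowerSeries (Fin n) S) * (dem i j 1 - 0) = 0 := by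
    rw [sub_zero, dem_mul_key hij, swapVars_one, sub_self]
  exact sub_eq_zero.mp (X_sub_X_regular hij _ h1)

theorem dem_X (hij : i ≠ j) : dem i j (X i : MvPowerSeries (Fin n) S) = 1 := by
  have h1 : (X i - X j : MvPowerSeries (Fin n) S) * (dem i j (X i) - 1) = 0 := by
    rw [mul_sub, mul_one, dem_mul_key hij, swapVars_X_left hij, sub_self]
  exact sub_eq_zero.mp (X_sub_X_regular hij _ h1)

theorem dem_swapFixed (hij : i ≠ j) (f : MvPowerSeries (Fin n) S) :
    swapVars i j (dem i j f) = dem i j f := by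
  have h2 := congrArg (swapVars i j) (dem_mul_key hij f)
  rw [swapVars_mul, swapVars_sub, swapVars_sub, swapVars_X_left hij, swapVars_X_right hij,
    swapVars_invol] at h2
  have h1 : (X i - X j : MvPowerSeries (Fin n) S)
      * (swapVars i j (dem i j f) - dem i j f) = 0 := by
    rw [mul_sub, dem_mul_key hij,
      show (X i - X j : MvPowerSeries (Fin n) S) * swapVars i j (dem i j f)
        = -((X j - X i) * swapVars i j (dem i j f)) from by ring, h2]
    ring
  exact sub_eq_zero.mp (X_sub_X_regular hij _ h1)

theorem mem_fixedSubalgebra_iff {f : MvPowerSeries (Fin n) S} :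
    f ∈ fixedSubalgebra S i j ↔ swapVars i j f = f := Iff.rfl

theorem exists_decomp (hij : i ≠ j) (f : MvPowerSeries (Fin n) S) :
    ∃ t0 t1 : fixedSubalgebra S i j, f = ↑t0 + ↑t1 * (X i : MvPowerSeries (Fin n) S) := by
  have h0 : swapVars i j (f - dem i j f * X i) = f - dem i j f * X i := by
    rw [swapVars_sub, swapVars_mul, dem_swapFixed hij, swapVars_X_left hij]
    have hk := dem_mul_key hij f
    linear_combination hk
  refine ⟨⟨f - dem i j f * X i, h0⟩, ⟨dem i j f, dem_swapFixed hij f⟩, ?_⟩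
  show f = (f - dem i j f * X i) + dem i j f * X i
  ring

theorem one_tmul_coe (c : fixedSubalgebra S i j) :
    (1 : MvPowerSeries (Fin n) S) ⊗ₜ[fixedSubalgebra S i j] (↑c : MvPowerSeries (Fin n) S)
      = (↑c : MvPowerSeries (Fin n) S) ⊗ₜ[fixedSubalgebra S i j]
        (1 : MvPowerSeries (Fin n) S) := by
  have hc : (algebraMap (fixedSubalgebra S i j) (MvPowerSeries (Fin n) S)) c
      = (↑c : MvPowerSeries (Fin n) S) := rfl
  have h1 := Algebra.TensorProduct.algebraMap_apply' (R := fixedSubalgebra S i j)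
    (A := MvPowerSeries (Fin n) S) (B := MvPowerSeries (Fin n) S) c
  have h2 := Algebra.TensorProduct.algebraMap_apply (R := fixedSubalgebra S i j)
    (S := fixedSubalgebra S i j) (A := MvPowerSeries (Fin n) S) (B := MvPowerSeries (Fin n) S) c
  rw [← hc, ← h1, h2]

theorem coe_mul_tmul (c : fixedSubalgebra S i j) (r t : MvPowerSeries (Fin n) S) :
    r ⊗ₜ[fixedSubalgebra S i j] ((↑c : MvPowerSeries (Fin n) S) * t)
      = ((↑c : MvPowerSeries (Fin n) S) * r) ⊗ₜ[fixedSubalgebra S i j] t := by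
  calc r ⊗ₜ[fixedSubalgebra S i j] ((↑c : MvPowerSeries (Fin n) S) * t)
      = (r ⊗ₜ[fixedSubalgebra S i j] (1 : MvPowerSeries (Fin n) S))
        * ((1 : MvPowerSeries (Fin n) S) ⊗ₜ[fixedSubalgebra S i j]
          ((↑c : MvPowerSeries (Fin n) S) * t)) := by
        rw [Algebra.TensorProduct.tmul_mul_tmul, mul_one, one_mul]
    _ = (r ⊗ₜ[fixedSubalgebra S i j] (1 : MvPowerSeries (Fin n) S))
        * (((1 : MvPowerSeries (Fin n) S) ⊗ₜ[fixedSubalgebra S i j]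
            (↑c : MvPowerSeries (Fin n) S))
          * ((1 : MvPowerSeries (Fin n) S) ⊗ₜ[fixedSubalgebra S i j] t)) := by
        congr 1
        rw [Algebra.TensorProduct.tmul_mul_tmul, one_mul]
    _ = (r ⊗ₜ[fixedSubalgebra S i j] (1 : MvPowerSeries (Fin n) S))
        * (((↑c : MvPowerSeries (Fin n) S) ⊗ₜ[fixedSubalgebra S i j]
            (1 : MvPowerSeries (Fin n) S))
          * ((1 : MvPowerSeries (Fin n) S) ⊗ₜ[fixedSubalgebra S i j] t)) := by
        rw [one_tmul_coe]
    _ = ((r ⊗ₜ[fixedSubalgebra S i j] (1 : MvPowerSeries (Fin n) S))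
        * ((↑c : MvPowerSeries (Fin n) S) ⊗ₜ[fixedSubalgebra S i j]
          (1 : MvPowerSeries (Fin n) S)))
        * ((1 : MvPowerSeries (Fin n) S) ⊗ₜ[fixedSubalgebra S i j] t) := by
        rw [mul_assoc]
    _ = ((r * ↑c) ⊗ₜ[fixedSubalgebra S i j] (1 : MvPowerSeries (Fin n) S))
        * ((1 : MvPowerSeries (Fin n) S) ⊗ₜ[fixedSubalgebra S i j] t) := by
        rw [Algebra.TensorProduct.tmul_mul_tmul, mul_one]
    _ = (r * ↑c) ⊗ₜ[fixedSubalgebra S i j] t := by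
        rw [Algebra.TensorProduct.tmul_mul_tmul, mul_one, one_mul]
    _ = (↑c * r) ⊗ₜ[fixedSubalgebra S i j] t := by rw [mul_comm r (↑c : MvPowerSeries (Fin n) S)]

set_option maxHeartbeats 1000000 in
theorem bsb_decomp (hij : i ≠ j) (a : BSB S i j) :
    ∃ f h : MvPowerSeries (Fin n) S,
      a = f ⊗ₜ[fixedSubalgebra S i j] (1 : MvPowerSeries (Fin n) S)
        + h ⊗ₜ[fixedSubalgebra S i j] (X i : MvPowerSeries (Fin n) S) := by
  induction a using TensorProduct.induction_on with
  | zero =>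
    exact ⟨0, 0, by rw [TensorProduct.zero_tmul, TensorProduct.zero_tmul, add_zero]⟩
  | tmul r t =>
    obtain ⟨t0, t1, ht⟩ := exists_decomp hij t
    refine ⟨↑t0 * r, ↑t1 * r, ?_⟩
    rw [ht, TensorProduct.tmul_add]
    congr 1
    · rw [show r ⊗ₜ[fixedSubalgebra S i j] (↑t0 : MvPowerSeries (Fin n) S)
          = r ⊗ₜ[fixedSubalgebra S i j] ((↑t0 : MvPowerSeries (Fin n) S) * 1) from by
        rw [mul_one], coe_mul_tmul]
    · rw [coe_mul_tmul]
  | add x y hx hy =>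
    obtain ⟨f, h, hfh⟩ := hx
    obtain ⟨f', h', hfh'⟩ := hy
    refine ⟨f + f', h + h', ?_⟩
    rw [hfh, hfh', TensorProduct.add_tmul, TensorProduct.add_tmul]
    abel

set_option maxHeartbeats 1000000 in
set_option synthInstance.maxHeartbeats 400000 in
/-- `dem` as a linear map over the fixed subalgebra. -/
noncomputable def demLin (hij : i ≠ j) :
    MvPowerSeries (Fin n) S →ₗ[fixedSubalgebra S i j] MvPowerSeries (Fin n) S where
  toFun := dem i j
  map_add' := dem_add hij
  map_smul' := fun g f => by
    have hg : swapVars i j (g : MvPowerSeries (Fin n) S) = (g : MvPowerSeries (Fin n) S) := g.2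
    simp only [RingHom.id_apply, Subalgebra.smul_def, smul_eq_mul]
    exact dem_smul hij _ f hg

set_option maxHeartbeats 1000000 in
set_option synthInstance.maxHeartbeats 400000 in
/-- The splitting functional `φ : A → R`, `r ⊗ t ↦ r · dem t`. -/
noncomputable def phiMap (hij : i ≠ j) :
    BSB S i j →ₗ[fixedSubalgebra S i j] MvPowerSeries (Fin n) S :=
  TensorProduct.lift
    ((LinearMap.mul (fixedSubalgebra S i j) (MvPowerSeries (Fin n) S)).compl₂ (demLin hij))

set_option maxHeartbeats 1000000 in
set_option synthInstance.maxHeartbeats 400000 in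
theorem phiMap_tmul (hij : i ≠ j) (r t : MvPowerSeries (Fin n) S) :
    phiMap hij (r ⊗ₜ[fixedSubalgebra S i j] t) = r * dem i j t := by
  simp [phiMap, TensorProduct.lift.tmul, LinearMap.compl₂_apply, demLin]
  exact TensorProduct.lift.tmul _ _

set_option maxHeartbeats 1000000 in
set_option synthInstance.maxHeartbeats 400000 in
theorem master (hij : i ≠ j) (v y : MvPowerSeries (Fin n) S) (hv : IsUnit v)
    (μh : BSB S i j →ₐ[fixedSubalgebra S i j] MvPowerSeries (Fin n) S)
    (hμ1 : ∀ r : MvPowerSeries (Fin n) S,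
      μh (r ⊗ₜ[fixedSubalgebra S i j] (1 : MvPowerSeries (Fin n) S)) = r)
    (hμX : μh ((1 : MvPowerSeries (Fin n) S) ⊗ₜ[fixedSubalgebra S i j]
      (X i : MvPowerSeries (Fin n) S)) = y)
    (ξ : BSB S i j)
    (hξ : ξ = (Ring.inverse v ⊗ₜ[fixedSubalgebra S i j] (1 : MvPowerSeries (Fin n) S)) *
      ((1 : MvPowerSeries (Fin n) S) ⊗ₜ[fixedSubalgebra S i j] (X i : MvPowerSeries (Fin n) S)
        - y ⊗ₜ[fixedSubalgebra S i j] (1 : MvPowerSeries (Fin n) S))) :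
    Function.Injective (fun r : MvPowerSeries (Fin n) S =>
        (r ⊗ₜ[fixedSubalgebra S i j] (1 : MvPowerSeries (Fin n) S)) * ξ) ∧
      Function.Surjective μh ∧
      Set.range (fun r : MvPowerSeries (Fin n) S =>
          (r ⊗ₜ[fixedSubalgebra S i j] (1 : MvPowerSeries (Fin n) S)) * ξ)
        = {a : BSB S i j | μh a = 0} := by
  have key1 : ∀ r : MvPowerSeries (Fin n) S,
      (r ⊗ₜ[fixedSubalgebra S i j] (1 : MvPowerSeries (Fin n) S)) * ξ
      = (r * Ring.inverse v) ⊗ₜ[fixedSubalgebra S i j] (X i : MvPowerSeries (Fin n) S)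
        - (r * Ring.inverse v * y) ⊗ₜ[fixedSubalgebra S i j] (1 : MvPowerSeries (Fin n) S) := by
    intro r
    have hdistrib : ∀ w a b : BSB S i j, w * (a - b) = w * a - w * b := fun w a b => by ring
    rw [hξ, ← mul_assoc, Algebra.TensorProduct.tmul_mul_tmul, mul_one, hdistrib,
      Algebra.TensorProduct.tmul_mul_tmul, Algebra.TensorProduct.tmul_mul_tmul,
      mul_one, mul_one, one_mul]
  have hμt : ∀ r : MvPowerSeries (Fin n) S,
      μh (r ⊗ₜ[fixedSubalgebra S i j] (X i : MvPowerSeries (Fin n) S)) = r * y := by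
    intro r
    have h1 : (r ⊗ₜ[fixedSubalgebra S i j] (X i : MvPowerSeries (Fin n) S))
        = (r ⊗ₜ[fixedSubalgebra S i j] (1 : MvPowerSeries (Fin n) S))
          * ((1 : MvPowerSeries (Fin n) S) ⊗ₜ[fixedSubalgebra S i j]
            (X i : MvPowerSeries (Fin n) S)) := by
      rw [Algebra.TensorProduct.tmul_mul_tmul, mul_one, one_mul]
    rw [h1, map_mul, hμ1, hμX]
  refine ⟨?_, fun r => ⟨r ⊗ₜ[fixedSubalgebra S i j] (1 : MvPowerSeries (Fin n) S), hμ1 r⟩, ?_⟩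
  · intro r1 r2 hr
    have hr' : (r1 ⊗ₜ[fixedSubalgebra S i j] (1 : MvPowerSeries (Fin n) S)) * ξ
        = (r2 ⊗ₜ[fixedSubalgebra S i j] (1 : MvPowerSeries (Fin n) S)) * ξ := hr
    rw [key1, key1] at hr'
    have h2 := congrArg (phiMap hij) hr'
    rw [map_sub, map_sub, phiMap_tmul hij, phiMap_tmul hij, phiMap_tmul hij, phiMap_tmul hij,
      dem_one hij, dem_X hij, mul_one, mul_one, mul_zero, mul_zero, sub_zero, sub_zero] at h2
    have h3 : r1 * Ring.inverse v * v = r2 * Ring.inverse v * v := by rw [h2]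
    rwa [Ring.inverse_mul_cancel_right v r1 hv, Ring.inverse_mul_cancel_right v r2 hv] at h3
  · ext a
    simp only [Set.mem_range, Set.mem_setOf_eq]
    constructor
    · rintro ⟨r, rfl⟩
      show μh ((r ⊗ₜ[fixedSubalgebra S i j] (1 : MvPowerSeries (Fin n) S)) * ξ) = 0
      rw [key1, map_sub, hμt, hμ1]
      ring
    · intro ha
      obtain ⟨f, h, rfl⟩ := bsb_decomp hij a
      rw [map_add, hμ1, hμt] at ha
      refine ⟨h * v, ?_⟩
      show ((h * v) ⊗ₜ[fixedSubalgebra S i j] (1 : MvPowerSeries (Fin n) S)) * ξ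
        = f ⊗ₜ[fixedSubalgebra S i j] (1 : MvPowerSeries (Fin n) S)
          + h ⊗ₜ[fixedSubalgebra S i j] (X i : MvPowerSeries (Fin n) S)
      rw [key1, show h * v * Ring.inverse v = h from Ring.mul_inverse_cancel_right v h hv]
      have hf : f = -(h * y) := eq_neg_of_add_eq_zero_left ha
      rw [hf, TensorProduct.neg_tmul]
      abel

theorem constantCoeff_msubst {k : ℕ} (a : Fin k → MvPowerSeries (Fin n) S)
    (F : MvPowerSeries (Fin k) S) :
    MvPowerSeries.constantCoeff (σ := Fin n) (R := S) (msubst a F)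
      = MvPowerSeries.constantCoeff (σ := Fin k) (R := S) F := by
  rw [← MvPowerSeries.coeff_zero_eq_constantCoeff_apply,
    ← MvPowerSeries.coeff_zero_eq_constantCoeff_apply, MvPowerSeries.coeff_apply]
  show msubst a F (0 : Fin n →₀ ℕ) = _
  simp only [msubst]
  rw [show ((0 : Fin n →₀ ℕ).sum fun _ e => e) = 0 from Finsupp.sum_zero_index]
  rw [show (equivFunOnFinite.symm fun _ : Fin k => (0 : ℕ)) = (0 : Fin k →₀ ℕ) from by
    ext x; rfl]
  rw [show Finset.Iic (0 : Fin k →₀ ℕ) = {0} from by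
    ext d; simp [Finset.mem_Iic, le_zero_iff]]
  rw [Finset.sum_singleton]
  rw [show (∏ jj : Fin k, a jj ^ ((0 : Fin k →₀ ℕ) jj)) = 1 from by simp]
  rw [show (MvPowerSeries.coeff (0 : Fin n →₀ ℕ)) (1 : MvPowerSeries (Fin n) S) = 1 from by
    rw [MvPowerSeries.coeff_zero_eq_constantCoeff_apply, map_one]]
  rw [mul_one]

end Aux

set_option maxHeartbeats 1000000 in
set_option synthInstance.maxHeartbeats 400000 in
/-- the two sequences `0 → R → A → R → 0`, with first maps
`r ↦ (r ⊗ 1)·ξ` (resp. `r ↦ (r ⊗ 1)·ξ'`) and second maps `μ_s` (resp. `μ`),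
are short exact. -/
theorem xi_sequences_short_exact
    (F : MvPowerSeries (Fin 2) S) (hF : IsFormalGroupLaw F)
    (ι : MvPowerSeries (Fin 1) S) (hι : IsFormalInverse F ι)
    (g : MvPowerSeries (Fin 2) S)
    (hg : (X 0 : MvPowerSeries (Fin 2) S) - X 1 = fsub F ι (X 0) (X 1) * g)
    (hgu : IsUnit g)
    {n : ℕ} (i j : Fin n) (hij : (i : ℕ) + 1 = (j : ℕ)) :
    (Function.Injective (fun r : MvPowerSeries (Fin n) S =>
        (r ⊗ₜ[fixedSubalgebra S i j] (1 : MvPowerSeries (Fin n) S)) * xiElt g i j) ∧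
      Function.Surjective (mulsHom S i j) ∧
      Set.range (fun r : MvPowerSeries (Fin n) S =>
          (r ⊗ₜ[fixedSubalgebra S i j] (1 : MvPowerSeries (Fin n) S)) * xiElt g i j)
        = {a : BSB S i j | mulsHom S i j a = 0}) ∧
    (Function.Injective (fun r : MvPowerSeries (Fin n) S =>
        (r ⊗ₜ[fixedSubalgebra S i j] (1 : MvPowerSeries (Fin n) S)) * xiElt' g i j) ∧
      Function.Surjective (mulHom S i j) ∧
      Set.range (fun r : MvPowerSeries (Fin n) S =>
          (r ⊗ₜ[fixedSubalgebra S i j] (1 : MvPowerSeries (Fin n) S)) * xiElt' g i j)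
        = {a : BSB S i j | mulHom S i j a = 0}) := by
  have hij' : i ≠ j := fun hcon => by rw [hcon] at hij; omega
  have hvu : ∀ a b : MvPowerSeries (Fin n) S, IsUnit (gsub g a b) := by
    intro a b
    rw [MvPowerSeries.isUnit_iff_constantCoeff, gsub, constantCoeff_msubst]
    exact MvPowerSeries.isUnit_iff_constantCoeff.mp hgu
  have hμ1s : ∀ r : MvPowerSeries (Fin n) S,
      mulsHom S i j (r ⊗ₜ[fixedSubalgebra S i j] (1 : MvPowerSeries (Fin n) S)) = r := by
    intro r
    erw [mulsHom, Algebra.TensorProduct.productMap_apply_tmul, map_one, mul_one, AlgHom.id_apply]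
  have hμXs : mulsHom S i j ((1 : MvPowerSeries (Fin n) S) ⊗ₜ[fixedSubalgebra S i j]
      (X i : MvPowerSeries (Fin n) S)) = (X j : MvPowerSeries (Fin n) S) := by
    erw [mulsHom, Algebra.TensorProduct.productMap_apply_tmul, AlgHom.id_apply, one_mul]
    show swapVars i j (X i : MvPowerSeries (Fin n) S) = X j
    exact swapVars_X_left hij'
  have hμ1 : ∀ r : MvPowerSeries (Fin n) S,
      mulHom S i j (r ⊗ₜ[fixedSubalgebra S i j] (1 : MvPowerSeries (Fin n) S)) = r := by
    intro r
    erw [mulHom, Algebra.TensorProduct.productMap_apply_tmul, map_one, mul_one, AlgHom.id_apply]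
  have hμX : mulHom S i j ((1 : MvPowerSeries (Fin n) S) ⊗ₜ[fixedSubalgebra S i j]
      (X i : MvPowerSeries (Fin n) S)) = (X i : MvPowerSeries (Fin n) S) := by
    erw [mulHom, Algebra.TensorProduct.productMap_apply_tmul, AlgHom.id_apply, AlgHom.id_apply,
      one_mul]
  exact ⟨master hij' (gsub g (X i) (X j)) (X j) (hvu _ _) (mulsHom S i j) hμ1s hμXs
      (xiElt g i j) rfl,
    master hij' (gsub g (X j) (X i)) (X i) (hvu _ _) (mulHom S i j) hμ1 hμX
      (xiElt' g i j) rfl⟩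

end
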